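/- Let b_real, b_fake > 0 satisfy e^{-b_real} + e^{-b_fake} > 1, and let p, q ≥ 0 with (p,q) ≠ (0,0) be such that p/(p+q) does NOT lie in the open interval (1 - e^{-b_fake}, e^{-b_real}). Then every minimizer over (0,1) of g(d) = p·h(-log d, b_real) + q·h(-log(1-d), b_fake) lies in {1 - e^{-b_fake}, e^{-b_real}}, where h(L,b) = |L-b| + b. -/

import Mathlib

open Real Set

noncomputable def flood (L b : ℝ) : ℝ := |L - b| + b

lemma flood_ge_left (L b : ℝ) : L ≤ flood L b := by
  unfold flood; have := le_abs_self (L - b); linarith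

lemma flood_ge_right (L b : ℝ) : 2*b - L ≤ flood L b := by
  unfold flood; have := neg_abs_le (L - b); linarith

lemma flood_self (b : ℝ) : flood b b = b := by simp [flood]

lemma flood_of_ge {L b : ℝ} (h : b ≤ L) : flood L b = L := by
  unfold flood; rw [abs_of_nonneg (by linarith)]; ring

lemma pos_combo {p q A B : ℝ} (hp : 0 ≤ p) (hq : 0 ≤ q) (hpq : 0 < p + q)
    (hA : 0 < A) (hB : 0 < B) : 0 < p*A + q*B := by
  rcases hp.lt_or_eq with h | h
  · nlinarith
  · nlinarith

lemma vmono_inc {p q x y : ℝ} (hp : 0 ≤ p) (hq : 0 < q) (hx : 0 < x)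
    (hxy : x < y) (hy : y < 1) (hr : p ≤ (p+q)*x) :
    -p*Real.log x - q*Real.log (1-x) < -p*Real.log y - q*Real.log (1-y) := by
  have hy0 : 0 < y := hx.trans hxy
  have hx1 : x < 1 := hxy.trans hy
  have hxx : 0 < 1 - x := by linarith
  have hyy : 0 < 1 - y := by linarith
  have h1 : x * (Real.log y - Real.log x) ≤ y - x := by
    have h := Real.log_le_sub_one_of_pos (show (0:ℝ) < y/x from div_pos hy0 hx)
    rw [Real.log_div (ne_of_gt hy0) (ne_of_gt hx)] at h
    have h2 : x * (Real.log y - Real.log x) ≤ x * (y/x - 1) :=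
      mul_le_mul_of_nonneg_left h hx.le
    have h3 : x * (y/x - 1) = y - x := by field_simp
    linarith
  have h2 : y - x < (1-x) * (Real.log (1-x) - Real.log (1-y)) := by
    have h := Real.log_lt_sub_one_of_pos (show (0:ℝ) < (1-y)/(1-x) from div_pos hyy hxx)
      (by intro hcon; rw [div_eq_one_iff_eq (ne_of_gt hxx)] at hcon; linarith)
    rw [Real.log_div (ne_of_gt hyy) (ne_of_gt hxx)] at h
    have h3 : (1-x) * (Real.log (1-y) - Real.log (1-x)) < (1-x) * ((1-y)/(1-x) - 1) :=
      mul_lt_mul_of_pos_left h hxx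
    have h4 : (1-x) * ((1-y)/(1-x) - 1) = x - y := by field_simp; ring
    nlinarith
  have hA : 0 < Real.log y - Real.log x := sub_pos.mpr (Real.log_lt_log hx hxy)
  -- want p*(log y - log x) < q*(log(1-x) - log(1-y))
  nlinarith [mul_le_mul_of_nonneg_left h1 hp, mul_lt_mul_of_pos_left h2 hq,
    mul_pos hq (sub_pos.mpr hxy), mul_nonneg hp hA.le,
    mul_le_mul_of_nonneg_right hr hA.le]

lemma vmono_dec {p q x y : ℝ} (hp : 0 < p) (hq : 0 ≤ q) (hx : 0 < x)
    (hxy : x < y) (hy : y < 1) (hr : (p+q)*y ≤ p) :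
    -p*Real.log y - q*Real.log (1-y) < -p*Real.log x - q*Real.log (1-x) := by
  have hy0 : 0 < y := hx.trans hxy
  have hx1 : x < 1 := hxy.trans hy
  have hxx : 0 < 1 - x := by linarith
  have hyy : 0 < 1 - y := by linarith
  have h1 : y - x < y * (Real.log y - Real.log x) := by
    have h := Real.log_lt_sub_one_of_pos (show (0:ℝ) < x/y from div_pos hx hy0)
      (by intro hcon; rw [div_eq_one_iff_eq (ne_of_gt hy0)] at hcon; linarith)
    rw [Real.log_div (ne_of_gt hx) (ne_of_gt hy0)] at h
    have h3 : y * (Real.log x - Real.log y) < y * (x/y - 1) :=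
      mul_lt_mul_of_pos_left h hy0
    have h4 : y * (x/y - 1) = x - y := by field_simp
    nlinarith
  have h2 : (1-y) * (Real.log (1-x) - Real.log (1-y)) ≤ y - x := by
    have h := Real.log_le_sub_one_of_pos (show (0:ℝ) < (1-x)/(1-y) from div_pos hxx hyy)
    rw [Real.log_div (ne_of_gt hxx) (ne_of_gt hyy)] at h
    have h3 : (1-y) * (Real.log (1-x) - Real.log (1-y)) ≤ (1-y) * ((1-x)/(1-y) - 1) :=
      mul_le_mul_of_nonneg_left h hyy.le
    have h4 : (1-y) * ((1-x)/(1-y) - 1) = y - x := by field_simp; ring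
    linarith
  have hB : 0 < Real.log (1-x) - Real.log (1-y) :=
    sub_pos.mpr (Real.log_lt_log hyy (by linarith))
  -- want q*(log(1-x) - log(1-y)) < p*(log y - log x)
  nlinarith [mul_lt_mul_of_pos_left h1 hp, mul_le_mul_of_nonneg_left h2 hq,
    mul_pos hp (sub_pos.mpr hxy), mul_nonneg hq hB.le,
    mul_le_mul_of_nonneg_right hr hB.le]

theorem flooded_bce_minimizers_boundary_of_ratio_outside (breal bfake p q : ℝ)
    (hbr : 0 < breal) (hbf : 0 < bfake)
    (hsum : 1 < Real.exp (-breal) + Real.exp (-bfake))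
    (hp : 0 ≤ p) (hq : 0 ≤ q) (hpq : ¬(p = 0 ∧ q = 0))
    (hratio : p / (p + q) ∉ Ioo (1 - Real.exp (-bfake)) (Real.exp (-breal))) :
    ∀ d ∈ Ioo (0:ℝ) 1,
      IsMinOn (fun d => p * flood (-Real.log d) breal + q * flood (-Real.log (1 - d)) bfake)
        (Ioo (0:ℝ) 1) d →
      d ∈ ({1 - Real.exp (-bfake), Real.exp (-breal)} : Set ℝ) := by
  intro d hd hmin
  obtain ⟨hd0, hd1⟩ := hd
  set g : ℝ → ℝ := fun d => p * flood (-Real.log d) breal + q * flood (-Real.log (1 - d)) bfake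
    with hg
  set a := 1 - Real.exp (-bfake) with ha_def
  set c := Real.exp (-breal) with hc_def
  have hc0 : 0 < c := Real.exp_pos _
  have hc1 : c < 1 := Real.exp_lt_one_iff.mpr (by linarith)
  have he0 : 0 < Real.exp (-bfake) := Real.exp_pos _
  have he1 : Real.exp (-bfake) < 1 := Real.exp_lt_one_iff.mpr (by linarith)
  have ha0 : 0 < a := by rw [ha_def]; linarith
  have ha1 : a < 1 := by rw [ha_def]; linarith
  have hac : a < c := by rw [ha_def, hc_def]; linarith
  have hpq0 : 0 < p + q := by
    rcases hp.lt_or_eq with h | h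
    · linarith
    · rcases hq.lt_or_eq with h' | h'
      · linarith
      · exact absurd ⟨h.symm, h'.symm⟩ hpq
  have hloga : Real.log a < -breal := by
    have := Real.log_lt_log ha0 hac
    rwa [hc_def, Real.log_exp] at this
  have hlog1a : Real.log (1 - a) = -bfake := by
    rw [ha_def, show (1:ℝ) - (1 - Real.exp (-bfake)) = Real.exp (-bfake) by ring, Real.log_exp]
  have hlogc : Real.log c = -breal := Real.log_exp _
  have hlog1c : Real.log (1 - c) < -bfake := by
    have h1 : 1 - c < Real.exp (-bfake) := by rw [ha_def] at hac; linarith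
    have := Real.log_lt_log (by linarith : (0:ℝ) < 1 - c) h1
    rwa [Real.log_exp] at this
  -- values at a and c
  have hGa : g a = -p * Real.log a + q * bfake := by
    rw [hg]
    simp only
    rw [hlog1a, neg_neg, flood_self, flood_of_ge (by linarith : breal ≤ -Real.log a)]
    ring
  have hGc : g c = p * breal - q * Real.log (1 - c) := by
    rw [hg]
    simp only
    rw [hlogc, neg_neg, flood_self, flood_of_ge (by linarith : bfake ≤ -Real.log (1 - c))]
    ring
  -- lower bounds at d
  have hvd : -p * Real.log d - q * Real.log (1 - d) ≤ g d := by
    have h1 := mul_le_mul_of_nonneg_left (flood_ge_left (-Real.log d) breal) hp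
    have h2 := mul_le_mul_of_nonneg_left (flood_ge_left (-Real.log (1 - d)) bfake) hq
    rw [hg]; simp only; linarith
  have hud : -p * Real.log d + q * (2*bfake + Real.log (1 - d)) ≤ g d := by
    have h1 := mul_le_mul_of_nonneg_left (flood_ge_left (-Real.log d) breal) hp
    have h2 := mul_le_mul_of_nonneg_left (flood_ge_right (-Real.log (1 - d)) bfake) hq
    rw [hg]; simp only; linarith
  have hwd : p * (2*breal + Real.log d) - q * Real.log (1 - d) ≤ g d := by
    have h1 := mul_le_mul_of_nonneg_left (flood_ge_right (-Real.log d) breal) hp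
    have h2 := mul_le_mul_of_nonneg_left (flood_ge_left (-Real.log (1 - d)) bfake) hq
    rw [hg]; simp only; linarith
  have hma : g d ≤ g a := isMinOn_iff.mp hmin a ⟨ha0, ha1⟩
  have hmc : g d ≤ g c := isMinOn_iff.mp hmin c ⟨hc0, hc1⟩
  simp only [mem_insert_iff, mem_singleton_iff]
  by_cases hcase : p / (p + q) ≤ a
  · -- minimizer must be a
    left
    have hq0 : 0 < q := by
      rcases hq.lt_or_eq with h | h
      · exact h
      · exfalso
        rw [← h, add_zero, div_self (by linarith : p ≠ 0)] at hcase
        linarith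
    have hra : p ≤ (p + q) * a := by
      rw [div_le_iff₀ hpq0] at hcase; linarith [mul_comm a (p + q)]
    rcases lt_trichotomy d a with h | h | h
    · -- d < a : u is strictly decreasing, u a = g a
      exfalso
      have hA : 0 < Real.log a - Real.log d := sub_pos.mpr (Real.log_lt_log hd0 h)
      have hB : 0 < Real.log (1 - d) - Real.log (1 - a) :=
        sub_pos.mpr (Real.log_lt_log (by linarith) (by linarith))
      have hcomb := pos_combo hp hq hpq0 hA hB
      have : g a < -p * Real.log d + q * (2*bfake + Real.log (1 - d)) := by
        rw [hGa, hlog1a] at *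
        nlinarith
      linarith
    · exact h
    · -- a < d : v strictly increasing from a
      exfalso
      have hstep := vmono_inc hp hq0 ha0 h hd1 hra
      have hva : -p * Real.log a - q * Real.log (1 - a) = g a := by
        rw [hGa, hlog1a]; ring
      linarith
  · -- minimizer must be c
    right
    have hrc : c ≤ p / (p + q) := by
      rw [mem_Ioo, not_and, not_lt] at hratio
      exact hratio (lt_of_not_ge hcase)
    have hp0 : 0 < p := by
      rcases hp.lt_or_eq with h | h
      · exact h
      · exfalso
        rw [← h, zero_div] at hrc
        linarith
    have hrc' : (p + q) * c ≤ p := by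
      rw [le_div_iff₀ hpq0] at hrc; linarith [mul_comm c (p + q)]
    rcases lt_trichotomy d c with h | h | h
    · -- d < c : v strictly decreasing up to c
      exfalso
      have hstep := vmono_dec hp0 hq hd0 h hc1 hrc'
      have hvc : -p * Real.log c - q * Real.log (1 - c) = g c := by
        rw [hGc, hlogc]; ring
      linarith
    · exact h
    · -- c < d : w strictly increasing
      exfalso
      have hA : 0 < Real.log d - Real.log c := sub_pos.mpr (Real.log_lt_log hc0 h)
      have hB : 0 < Real.log (1 - c) - Real.log (1 - d) :=
        sub_pos.mpr (Real.log_lt_log (by linarith) (by linarith))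
      have hcomb := pos_combo hp hq hpq0 hA hB
      have : g c < p * (2*breal + Real.log d) - q * Real.log (1 - d) := by
        rw [hGc, hlogc] at *
        nlinarith
      linarith
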